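/- Let n ≥ 2 and let f : S_n → {0,1} satisfy: f(α) = 1 implies α(n) = n. Define g : S_{n−1} → {0,1} by g(β) = f(β'), where β' ∈ S_n is the extension of β ∈ S_{n−1} with β'(n) = n. Then deg g ≤ max(deg f − 1, 0). -/

import Mathlib

/-- `α` satisfies the certificate `C ⊆ [n] × [n]`. -/
def PermSatisfies (n : ℕ) (α : Equiv.Perm (Fin n)) (C : Finset (Fin n × Fin n)) : Prop :=
  ∀ p ∈ C, α p.1 = p.2

/-- `C` is a certificate for `α` with respect to `f`. -/
def IsPermCertFor (n : ℕ) (f : Equiv.Perm (Fin n) → ℝ) (α : Equiv.Perm (Fin n))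
    (C : Finset (Fin n × Fin n)) : Prop :=
  PermSatisfies n α C ∧ ∀ β : Equiv.Perm (Fin n), PermSatisfies n β C → f β = f α

/-- The certificate complexity `C(f, α)`: the minimum size of a certificate for `α`. -/
noncomputable def permCertComplexityAt (n : ℕ) (f : Equiv.Perm (Fin n) → ℝ)
    (α : Equiv.Perm (Fin n)) : ℕ :=
  sInf {k | ∃ C : Finset (Fin n × Fin n), C.card = k ∧ IsPermCertFor n f α C}

/-- The certificate complexity `C(f)`: the maximum of `C(f, α)` over all `α`. -/
noncomputable def permCertComplexity (n : ℕ) (f : Equiv.Perm (Fin n) → ℝ) : ℕ :=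
  Finset.univ.sup fun α : Equiv.Perm (Fin n) => permCertComplexityAt n f α

/-- The monomial `α ↦ ∏_{(i,j) ∈ S} x_{ij}(α)`. -/
def permMonomial (n : ℕ) (S : Finset (Fin n × Fin n)) : Equiv.Perm (Fin n) → ℝ :=
  fun α => ∏ p ∈ S, if α p.1 = p.2 then (1 : ℝ) else 0

/-- `f : S_n → ℝ` has degree at most `d`: it is a real linear combination of monomials
`∏_{(i,j) ∈ S} x_{ij}` with `|S| ≤ d`. -/
def PermDegLE (n d : ℕ) (f : Equiv.Perm (Fin n) → ℝ) : Prop :=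
  f ∈ Submodule.span ℝ {g : Equiv.Perm (Fin n) → ℝ |
    ∃ S : Finset (Fin n × Fin n), S.card ≤ d ∧ g = permMonomial n S}

/-- The degree of `f : S_n → ℝ`. -/
noncomputable def permDeg (n : ℕ) (f : Equiv.Perm (Fin n) → ℝ) : ℕ :=
  sInf {d | PermDegLE n d f}

/-- Two permutations are 2-intersecting: they agree on at least two points. -/
def PermTwoIntersecting (n : ℕ) (α β : Equiv.Perm (Fin n)) : Prop :=
  ∃ i j : Fin n, i ≠ j ∧ α i = β i ∧ α j = β j

/-- A family of permutations is 2-intersecting. -/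
def PermTwoIntersectingFamily (n : ℕ) (F : Finset (Equiv.Perm (Fin n))) : Prop :=
  ∀ α ∈ F, ∀ β ∈ F, PermTwoIntersecting n α β

/-- The coset `U_{i→j} = {α : α(i) = j}`, for `p = (i, j)`. -/
def PermCoset (n : ℕ) (p : Fin n × Fin n) : Set (Equiv.Perm (Fin n)) :=
  {α : Equiv.Perm (Fin n) | α p.1 = p.2}

/-- Two cosets are compatible if their intersection is nonempty. -/
def PermCosetCompatible (n : ℕ) (p q : Fin n × Fin n) : Prop :=
  (PermCoset n p ∩ PermCoset n q).Nonempty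

/-- `F` is `m`-covered: it is contained in a union of `m` pairwise compatible cosets. -/
def PermMCovered (n m : ℕ) (F : Finset (Equiv.Perm (Fin n))) : Prop :=
  ∃ P : Finset (Fin n × Fin n), P.card = m ∧
    (∀ p ∈ P, ∀ q ∈ P, PermCosetCompatible n p q) ∧
    ↑F ⊆ ⋃ p ∈ P, PermCoset n p

/-- A `t`-coset of `S_n`: the set of permutations sending `i₁,…,i_t` to `j₁,…,j_t`
respectively, for distinct `i`'s and distinct `j`'s. -/
def IsPermTCoset (n t : ℕ) (S : Set (Equiv.Perm (Fin n))) : Prop :=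
  ∃ C : Finset (Fin n × Fin n), C.card = t ∧
    (∀ p ∈ C, ∀ q ∈ C, (p.1 = q.1 → p = q) ∧ (p.2 = q.2 → p = q)) ∧
    S = {α : Equiv.Perm (Fin n) | ∀ p ∈ C, α p.1 = p.2}

/-- Extend a permutation of `Fin k` to a permutation of `Fin N` (where `N = k + 1`)
fixing the last point. -/
noncomputable def extPerm (k N : ℕ) (h : N = k + 1) (β : Equiv.Perm (Fin k)) :
    Equiv.Perm (Fin N) :=
  β.viaFintypeEmbedding (Fin.castLEEmb (by omega))
namespace PDR

open Equiv Finset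

lemma permMonomial_apply {n : ℕ} (S : Finset (Fin n × Fin n)) (α : Equiv.Perm (Fin n)) :
    permMonomial n S α = ∏ p ∈ S, if α p.1 = p.2 then (1 : ℝ) else 0 := rfl

variable {k : ℕ}

def up (x : Fin (k + 1)) : Fin (k + 2) := Fin.castLE (by omega) x

def dn (x : Fin (k + 2)) : Fin (k + 1) := if h : (x : ℕ) < k + 1 then ⟨x, h⟩ else 0

def LL (k : ℕ) : Fin (k + 2) := ⟨k + 1, by omega⟩

noncomputable def ext (β : Equiv.Perm (Fin (k + 1))) : Equiv.Perm (Fin (k + 2)) :=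
  extPerm (k + 1) (k + 2) rfl β

lemma up_ne (x : Fin (k + 1)) : up x ≠ LL k := by
  intro h
  have := congrArg Fin.val h
  simp only [up, LL, Fin.coe_castLE] at this
  omega

lemma dn_up (x : Fin (k + 1)) : dn (up x) = x := by
  simp only [dn, up, Fin.coe_castLE, Fin.is_lt, dif_pos]
  exact dif_pos x.is_lt

lemma up_dn {x : Fin (k + 2)} (h : x ≠ LL k) : up (dn x) = x := by
  have hx : (x : ℕ) < k + 1 := by
    have := x.is_lt
    have : (x : ℕ) ≠ k + 1 := fun hc => h (Fin.ext hc)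
    omega
  simp only [dn, hx, dif_pos, up]
  exact Fin.ext rfl

lemma up_inj {x y : Fin (k + 1)} (h : up x = up y) : x = y :=
  Fin.ext (by simpa [up, Fin.ext_iff] using h)

lemma ext_up (β : Equiv.Perm (Fin (k + 1))) (x : Fin (k + 1)) : ext β (up x) = up (β x) :=
  Equiv.Perm.viaFintypeEmbedding_apply_image β (Fin.castLEEmb (by omega)) x

lemma ext_LL (β : Equiv.Perm (Fin (k + 1))) : ext β (LL k) = LL k := by
  refine Equiv.Perm.viaFintypeEmbedding_apply_notMem_range β (Fin.castLEEmb (by omega)) ?_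
  rintro ⟨y, hy⟩
  have : (y : ℕ) = k + 1 := congrArg Fin.val hy
  omega

lemma ext_ne {x : Fin (k + 2)} (h : x ≠ LL k) (β : Equiv.Perm (Fin (k + 1))) :
    ext β x = up (β (dn x)) := by
  conv_lhs => rw [← up_dn h, ext_up]

lemma ext_ne_LL {x : Fin (k + 2)} (h : x ≠ LL k) (β : Equiv.Perm (Fin (k + 1))) :
    ext β x ≠ LL k := by
  rw [ext_ne h]; exact up_ne _

lemma ext_eq_iff {x y : Fin (k + 2)} (hx : x ≠ LL k) (hy : y ≠ LL k)
    (β : Equiv.Perm (Fin (k + 1))) : ext β x = y ↔ β (dn x) = dn y := by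
  rw [ext_ne hx]
  constructor
  · intro h; rw [← h, dn_up]
  · intro h; rw [h, up_dn hy]

end PDR
namespace PDR
open Equiv Finset

lemma monomial_degenerate {m : ℕ} {S : Finset (Fin m × Fin m)} {p q : Fin m × Fin m}
    (hp : p ∈ S) (hq : q ∈ S) (hpq : p ≠ q) (hc : p.1 = q.1 ∨ p.2 = q.2)
    (α : Equiv.Perm (Fin m)) : permMonomial m S α = 0 := by
  rw [permMonomial_apply]
  by_cases h1 : α p.1 = p.2
  · refine Finset.prod_eq_zero hq ?_
    have h2 : ¬ α q.1 = q.2 := by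
      intro h2
      rcases hc with h | h
      · exact hpq (Prod.ext h (by rw [← h1, ← h2, h]))
      · exact hpq (Prod.ext (α.injective (by rw [h1, h2, h])) h)
    simp [h2]
  · exact Finset.prod_eq_zero hp (by simp [h1])

lemma monomial_ne_zero {m : ℕ} {S : Finset (Fin m × Fin m)} {α : Equiv.Perm (Fin m)}
    (h : permMonomial m S α ≠ 0) : ∀ q ∈ S, α q.1 = q.2 := by
  intro q hq
  rw [permMonomial_apply, Finset.prod_ne_zero_iff] at h
  have := h q hq
  by_contra hc
  simp [hc] at this

/-- Any function on `S_{m+1}` has degree at most `m`. -/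
lemma anyDeg (m : ℕ) (h : Equiv.Perm (Fin (m + 1)) → ℝ) : PermDegLE (m + 1) m h := by
  classical
  set Sα : Equiv.Perm (Fin (m + 1)) → Finset (Fin (m + 1) × Fin (m + 1)) :=
    fun α => ((Finset.univ : Finset (Fin (m + 1))).erase 0).image (fun i => (i, α i)) with hSα
  have hinj : ∀ α : Equiv.Perm (Fin (m + 1)),
      Function.Injective (fun i : Fin (m + 1) => (i, α i)) := by
    intro α i j hij
    exact congrArg Prod.fst hij
  have hdelta : ∀ α β : Equiv.Perm (Fin (m + 1)),
      permMonomial (m + 1) (Sα α) β = if β = α then 1 else 0 := by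
    intro α β
    rw [permMonomial_apply, hSα]
    rw [Finset.prod_image (fun i _ j _ hij => hinj α hij)]
    by_cases hβα : β = α
    · subst hβα
      simp
    · rw [if_neg hβα]
      have : ∃ i : Fin (m + 1), i ≠ 0 ∧ β i ≠ α i := by
        by_contra hcon
        push_neg at hcon
        apply hβα
        apply Equiv.ext
        intro i
        by_cases hi : i = 0
        · subst hi
          -- β and α agree off 0; show β 0 = α 0
          set j := α⁻¹ (β 0) with hj
          by_cases hj0 : j = 0
          · have : α j = β 0 := by rw [hj]; simp
            rw [hj0] at this; exact this.symm
          · have hβj : β j = α j := hcon j hj0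
            have : α j = β 0 := by rw [hj]; simp
            rw [this] at hβj
            exact absurd (β.injective hβj) (by simpa using hj0)
        · exact hcon i hi
      obtain ⟨i, hi0, hi⟩ := this
      refine Finset.prod_eq_zero (Finset.mem_erase.2 ⟨hi0, Finset.mem_univ i⟩) ?_
      simp [hi]
  have hcard : ∀ α : Equiv.Perm (Fin (m + 1)), (Sα α).card = m := by
    intro α
    rw [hSα]
    rw [Finset.card_image_of_injective _ (hinj α), Finset.card_erase_of_mem (Finset.mem_univ _)]
    simp
  have hrepr : h = ∑ α : Equiv.Perm (Fin (m + 1)), h α • permMonomial (m + 1) (Sα α) := by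
    funext β
    rw [Finset.sum_apply]
    rw [Finset.sum_eq_single β]
    · simp [hdelta]
    · intro α _ hne
      simp [hdelta, Ne.symm hne]
    · intro hmem; exact absurd (Finset.mem_univ β) hmem
  rw [PermDegLE, hrepr]
  refine Submodule.sum_mem _ fun α _ => Submodule.smul_mem _ _ ?_
  exact Submodule.subset_span ⟨Sα α, le_of_eq (hcard α), rfl⟩

lemma const_of_degzero {m : ℕ} {f : Equiv.Perm (Fin m) → ℝ} (hf : PermDegLE m 0 f) :
    ∃ c : ℝ, ∀ α, f α = c := by
  refine Submodule.span_induction (p := fun x _ => ∃ c : ℝ, ∀ α, x α = c) ?_ ?_ ?_ ?_ hf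
  · rintro x ⟨S, hS, rfl⟩
    have : S = ∅ := Finset.card_eq_zero.1 (Nat.le_zero.1 hS)
    subst this
    exact ⟨1, fun α => by simp [permMonomial_apply]⟩
  · exact ⟨0, fun α => rfl⟩
  · rintro x y _ _ ⟨c, hc⟩ ⟨c', hc'⟩
    exact ⟨c + c', fun α => by simp [hc α, hc' α]⟩
  · rintro a x _ ⟨c, hc⟩
    exact ⟨a * c, fun α => by simp [hc α]⟩

lemma degLE_mono {m a b : ℕ} {f : Equiv.Perm (Fin m) → ℝ} (hab : a ≤ b)
    (hf : PermDegLE m a f) : PermDegLE m b f := by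
  refine Submodule.span_mono ?_ hf
  rintro x ⟨S, hS, rfl⟩
  exact ⟨S, hS.trans hab, rfl⟩

end PDR
namespace PDR
open Equiv Finset

noncomputable def wc (k d : ℕ) : ℝ := -(1 / ((k + 1 - d : ℕ) : ℝ))

lemma wc_cancel {k d : ℕ} (hd2 : d ≤ k) : 1 + ((k + 1 - d : ℕ) : ℝ) * wc k d = 0 := by
  have h1 : ((k + 1 - d : ℕ) : ℝ) ≠ 0 := Nat.cast_ne_zero.2 (by omega)
  rw [wc, mul_neg, mul_one_div_cancel h1, add_neg_cancel]

lemma prod_lower {k : ℕ} (β : Equiv.Perm (Fin (k + 1)))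
    (S' : Finset (Fin (k + 2) × Fin (k + 2))) (F : Fin (k + 2) × Fin (k + 2) → ℝ)
    (ψ : Fin (k + 2) × Fin (k + 2) → Fin (k + 1) × Fin (k + 1))
    (hF : ∀ p ∈ S', F p = if β (ψ p).1 = (ψ p).2 then (1 : ℝ) else 0)
    (hψ : ∀ p ∈ S', ∀ q ∈ S', ψ p = ψ q → p = q) :
    ∏ p ∈ S', F p = permMonomial (k + 1) (S'.image ψ) β := by
  rw [permMonomial_apply, Finset.prod_image hψ]
  exact Finset.prod_congr rfl hF

lemma key {k : ℕ} (d : ℕ) (hd1 : 1 ≤ d) (hd2 : d ≤ k)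
    (S : Finset (Fin (k + 2) × Fin (k + 2))) (hS : S.card ≤ d) :
    (fun β : Equiv.Perm (Fin (k + 1)) => ∑ i : Fin (k + 2),
        (if i = LL k then (1 : ℝ) else wc k d) *
          permMonomial (k + 2) S (ext β * Equiv.swap i (LL k)))
    ∈ Submodule.span ℝ {g : Equiv.Perm (Fin (k + 1)) → ℝ |
        ∃ T : Finset (Fin (k + 1) × Fin (k + 1)), T.card ≤ d - 1 ∧
          g = permMonomial (k + 1) T} := by
  classical
  by_cases hdeg : ∃ p ∈ S, ∃ q ∈ S, p ≠ q ∧ (p.1 = q.1 ∨ p.2 = q.2)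
  · obtain ⟨p, hp, q, hq, hpq, hc⟩ := hdeg
    have hz : (fun β : Equiv.Perm (Fin (k + 1)) => ∑ i : Fin (k + 2),
        (if i = LL k then (1 : ℝ) else wc k d) *
          permMonomial (k + 2) S (ext β * Equiv.swap i (LL k)))
        = (0 : Equiv.Perm (Fin (k + 1)) → ℝ) := by
      funext β
      simp only [monomial_degenerate hp hq hpq hc, mul_zero, Finset.sum_const_zero]
      rfl
    rw [hz]
    exact Submodule.zero_mem _
  push_neg at hdeg
  have Hinj1 : ∀ p ∈ S, ∀ q ∈ S, p.1 = q.1 → p = q := by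
    intro p hp q hq h
    by_contra hne
    exact (hdeg p hp q hq hne).1 h
  have Hinj2 : ∀ p ∈ S, ∀ q ∈ S, p.2 = q.2 → p = q := by
    intro p hp q hq h
    by_contra hne
    exact (hdeg p hp q hq hne).2 h
  by_cases hA : (LL k, LL k) ∈ S
  -- Case A : the pair (L, L) is in S
  · refine Submodule.subset_span
      ⟨(S.erase (LL k, LL k)).image (fun p => (dn p.1, dn p.2)), ?_, ?_⟩
    · calc ((S.erase (LL k, LL k)).image (fun p => (dn p.1, dn p.2))).card
          ≤ (S.erase (LL k, LL k)).card := Finset.card_image_le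
        _ = S.card - 1 := Finset.card_erase_of_mem hA
        _ ≤ d - 1 := by omega
    · funext β
      rw [Finset.sum_eq_single (LL k)]
      · rw [if_pos rfl, one_mul, permMonomial_apply,
          ← Finset.mul_prod_erase S _ hA]
        have hfac : (if (ext β * Equiv.swap (LL k) (LL k)) (LL k, LL k).1
            = (LL k, LL k).2 then (1 : ℝ) else 0) = 1 := by
          refine if_pos ?_
          show (ext β * Equiv.swap (LL k) (LL k)) (LL k) = LL k
          rw [Equiv.Perm.mul_apply, Equiv.swap_self, Equiv.refl_apply, ext_LL]
        simp only [hfac, one_mul]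
        refine prod_lower β _ _ _ ?_ ?_
        · intro p hp
          obtain ⟨hpne, hpS⟩ := Finset.mem_erase.1 hp
          have hp1 : p.1 ≠ LL k := fun h => hpne (Hinj1 p hpS (LL k, LL k) hA h)
          have hp2 : p.2 ≠ LL k := fun h => hpne (Hinj2 p hpS (LL k, LL k) hA h)
          have hσ : (ext β * Equiv.swap (LL k) (LL k)) p.1 = ext β p.1 := by
            rw [Equiv.Perm.mul_apply, Equiv.swap_self, Equiv.refl_apply]
          rw [hσ]
          simp only [ext_eq_iff hp1 hp2 β]
        · intro p hp q hq hpsi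
          obtain ⟨hpne, hpS⟩ := Finset.mem_erase.1 hp
          obtain ⟨hqne, hqS⟩ := Finset.mem_erase.1 hq
          have hp1 : p.1 ≠ LL k := fun h => hpne (Hinj1 p hpS (LL k, LL k) hA h)
          have hq1 : q.1 ≠ LL k := fun h => hqne (Hinj1 q hqS (LL k, LL k) hA h)
          have h1 : dn p.1 = dn q.1 := congrArg Prod.fst hpsi
          have : p.1 = q.1 := by rw [← up_dn hp1, ← up_dn hq1, h1]
          exact Hinj1 p hpS q hqS this
      · intro i _ hiL
        rw [permMonomial_apply]
        rw [Finset.prod_eq_zero hA (h := ?_), mul_zero]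
        refine if_neg ?_
        show ¬ (ext β * Equiv.swap i (LL k)) (LL k) = LL k
        rw [Equiv.Perm.mul_apply, Equiv.swap_apply_right]
        exact ext_ne_LL hiL β
      · intro h; exact absurd (Finset.mem_univ _) h
  · by_cases hB : ∃ a, (a, LL k) ∈ S
    -- Case B : some pair (a₀, L) with a₀ ≠ L
    · obtain ⟨a₀, ha₀⟩ := hB
      have ha₀L : a₀ ≠ LL k := fun h => hA (h ▸ ha₀)
      set ψ : Fin (k + 2) × Fin (k + 2) → Fin (k + 1) × Fin (k + 1) :=
        fun p => (dn (if p.1 = LL k then a₀ else p.1), dn p.2) with hψdef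
      have hfun : (fun β : Equiv.Perm (Fin (k + 1)) => ∑ i : Fin (k + 2),
          (if i = LL k then (1 : ℝ) else wc k d) *
            permMonomial (k + 2) S (ext β * Equiv.swap i (LL k)))
          = wc k d • permMonomial (k + 1) ((S.erase (a₀, LL k)).image ψ) := by
        funext β
        rw [Pi.smul_apply, smul_eq_mul]
        rw [Finset.sum_eq_single a₀]
        · rw [if_neg ha₀L]
          congr 1
          rw [permMonomial_apply, ← Finset.mul_prod_erase S _ ha₀]
          have hfac : (if (ext β * Equiv.swap a₀ (LL k)) (a₀, LL k).1
              = (a₀, LL k).2 then (1 : ℝ) else 0) = 1 := by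
            refine if_pos ?_
            show (ext β * Equiv.swap a₀ (LL k)) a₀ = LL k
            rw [Equiv.Perm.mul_apply, Equiv.swap_apply_left, ext_LL]
          simp only [hfac, one_mul]
          refine prod_lower β _ _ _ ?_ ?_
          · intro p hp
            obtain ⟨hpne, hpS⟩ := Finset.mem_erase.1 hp
            have hp2 : p.2 ≠ LL k := fun h => hpne (Hinj2 p hpS (a₀, LL k) ha₀ h)
            have hp1a : p.1 ≠ a₀ := fun h => hpne (Hinj1 p hpS (a₀, LL k) ha₀ h)
            by_cases hpL : p.1 = LL k
            · have hσ : (ext β * Equiv.swap a₀ (LL k)) p.1 = ext β a₀ := by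
                rw [Equiv.Perm.mul_apply, hpL, Equiv.swap_apply_right]
              rw [hσ]
              simp only [hψdef, hpL, if_pos]
              simp only [ext_eq_iff ha₀L hp2 β]
            · have hσ : (ext β * Equiv.swap a₀ (LL k)) p.1 = ext β p.1 := by
                rw [Equiv.Perm.mul_apply, Equiv.swap_apply_of_ne_of_ne hp1a hpL]
              rw [hσ]
              simp only [hψdef, if_neg hpL]
              simp only [ext_eq_iff hpL hp2 β]
          · intro p hp q hq hpsi
            obtain ⟨hpne, hpS⟩ := Finset.mem_erase.1 hp
            obtain ⟨hqne, hqS⟩ := Finset.mem_erase.1 hq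
            have hp2 : p.2 ≠ LL k := fun h => hpne (Hinj2 p hpS (a₀, LL k) ha₀ h)
            have hq2 : q.2 ≠ LL k := fun h => hqne (Hinj2 q hqS (a₀, LL k) ha₀ h)
            have h2 : dn p.2 = dn q.2 := congrArg Prod.snd hpsi
            have : p.2 = q.2 := by rw [← up_dn hp2, ← up_dn hq2, h2]
            exact Hinj2 p hpS q hqS this
        · intro i _ hia
          rw [permMonomial_apply]
          rw [Finset.prod_eq_zero ha₀ (h := ?_), mul_zero]
          refine if_neg ?_
          show ¬ (ext β * Equiv.swap i (LL k)) a₀ = LL k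
          rw [Equiv.Perm.mul_apply, Equiv.swap_apply_of_ne_of_ne (Ne.symm hia) ha₀L]
          exact ext_ne_LL ha₀L β
        · intro h; exact absurd (Finset.mem_univ _) h
      rw [hfun]
      refine Submodule.smul_mem _ _ (Submodule.subset_span ⟨_, ?_, rfl⟩)
      calc ((S.erase (a₀, LL k)).image ψ).card ≤ (S.erase (a₀, LL k)).card :=
            Finset.card_image_le
        _ = S.card - 1 := Finset.card_erase_of_mem ha₀
        _ ≤ d - 1 := by omega
    · by_cases hC : ∃ b, (LL k, b) ∈ S
      -- Case C : some pair (L, b₀), no pair with second coordinate L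
      · obtain ⟨b₀, hb₀⟩ := hC
        have hb₀L : b₀ ≠ LL k := fun h => hA (h ▸ hb₀)
        push_neg at hB
        set S' := S.erase (LL k, b₀) with hS'def
        have hS'1 : ∀ p ∈ S', p.1 ≠ LL k := by
          intro p hp h
          exact (Finset.mem_erase.1 hp).1 (Hinj1 p (Finset.mem_erase.1 hp).2 (LL k, b₀) hb₀ h)
        have hS'2 : ∀ p ∈ S', p.2 ≠ LL k := by
          rintro ⟨a, b⟩ hp h
          dsimp at h
          subst h
          exact hB a (Finset.mem_erase.1 hp).2
        set TC := S'.image (fun p => (dn p.1, dn p.2)) with hTCdef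
        set c : ℝ := if b₀ ∈ S'.image Prod.snd then 0 else wc k d with hcdef
        have hfun : (fun β : Equiv.Perm (Fin (k + 1)) => ∑ i : Fin (k + 2),
            (if i = LL k then (1 : ℝ) else wc k d) *
              permMonomial (k + 2) S (ext β * Equiv.swap i (LL k)))
            = c • permMonomial (k + 1) TC := by
          funext β
          rw [Pi.smul_apply, smul_eq_mul]
          set istar := up (β⁻¹ (dn b₀)) with histar
          have hiL : istar ≠ LL k := up_ne _
          have hdni : dn istar = β⁻¹ (dn b₀) := dn_up _
          have hexti : ext β istar = b₀ := by
            rw [ext_ne hiL, hdni, Equiv.Perm.coe_inv, Equiv.apply_symm_apply, up_dn hb₀L]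
          have huniq : ∀ i : Fin (k + 2), i ≠ LL k → ext β i = b₀ → i = istar := by
            intro i hi h
            have := (ext_eq_iff hi hb₀L β).1 h
            have : dn i = β⁻¹ (dn b₀) := by
              rw [← this, Equiv.Perm.coe_inv, Equiv.symm_apply_apply]
            rw [← up_dn hi, this, histar]
          rw [Finset.sum_eq_single istar]
          · rw [if_neg hiL]
            rw [permMonomial_apply, ← Finset.mul_prod_erase S _ hb₀]
            have hfac : (if (ext β * Equiv.swap istar (LL k)) (LL k, b₀).1
                = (LL k, b₀).2 then (1 : ℝ) else 0) = 1 := by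
              refine if_pos ?_
              show (ext β * Equiv.swap istar (LL k)) (LL k) = b₀
              rw [Equiv.Perm.mul_apply, Equiv.swap_apply_right, hexti]
            simp only [hfac, one_mul]
            rw [← hS'def]
            by_cases hdom : ∃ p ∈ S', p.1 = istar
            · obtain ⟨p₀, hp₀, hp₀1⟩ := hdom
              rw [Finset.prod_eq_zero hp₀ (h := ?_), mul_zero]
              · by_cases hm : permMonomial (k + 1) TC β = 0
                · rw [hm, mul_zero]
                · have hall := monomial_ne_zero hm
                  have h1 : β (dn p₀.1) = dn p₀.2 :=
                    hall _ (Finset.mem_image_of_mem _ hp₀)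
                  rw [hp₀1, hdni, Equiv.Perm.coe_inv, Equiv.apply_symm_apply] at h1
                  have hb2 : b₀ = p₀.2 := by
                    rw [← up_dn hb₀L, h1, up_dn (hS'2 p₀ hp₀)]
                  have hbmem : b₀ ∈ S'.image Prod.snd :=
                    Finset.mem_image.2 ⟨p₀, hp₀, hb2.symm⟩
                  rw [hcdef, if_pos hbmem, zero_mul]
              · refine if_neg ?_
                show ¬ (ext β * Equiv.swap istar (LL k)) p₀.1 = p₀.2
                rw [Equiv.Perm.mul_apply, hp₀1, Equiv.swap_apply_left, ext_LL]
                exact Ne.symm (hS'2 p₀ hp₀)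
            · push_neg at hdom
              have hprod : ∏ p ∈ S', (if (ext β * Equiv.swap istar (LL k)) p.1 = p.2
                  then (1 : ℝ) else 0) = permMonomial (k + 1) TC β := by
                refine prod_lower β _ _ _ ?_ ?_
                · intro p hp
                  have hσ : (ext β * Equiv.swap istar (LL k)) p.1 = ext β p.1 := by
                    rw [Equiv.Perm.mul_apply,
                      Equiv.swap_apply_of_ne_of_ne (hdom p hp) (hS'1 p hp)]
                  rw [hσ]
                  simp only [ext_eq_iff (hS'1 p hp) (hS'2 p hp) β]
                · intro p hp q hq hpsi
                  have h1 : dn p.1 = dn q.1 := congrArg Prod.fst hpsi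
                  have : p.1 = q.1 := by
                    rw [← up_dn (hS'1 p hp), ← up_dn (hS'1 q hq), h1]
                  exact Hinj1 p (Finset.mem_erase.1 hp).2 q (Finset.mem_erase.1 hq).2 this
              rw [hprod]
              by_cases hb : b₀ ∈ S'.image Prod.snd
              · obtain ⟨p₁, hp₁, hp₁2⟩ := Finset.mem_image.1 hb
                have hm : permMonomial (k + 1) TC β = 0 := by
                  by_contra hm
                  have hall := monomial_ne_zero hm
                  have h1 : β (dn p₁.1) = dn p₁.2 :=
                    hall _ (Finset.mem_image_of_mem _ hp₁)
                  rw [hp₁2] at h1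
                  have : dn p₁.1 = β⁻¹ (dn b₀) := by
                    rw [← h1, Equiv.Perm.coe_inv, Equiv.symm_apply_apply]
                  have : p₁.1 = istar := by
                    rw [← up_dn (hS'1 p₁ hp₁), this, histar]
                  exact hdom p₁ hp₁ this
                rw [hm, mul_zero, mul_zero]
              · rw [hcdef, if_neg hb]
          · intro i _ hii
            rw [permMonomial_apply]
            rw [Finset.prod_eq_zero hb₀ (h := ?_), mul_zero]
            refine if_neg ?_
            show ¬ (ext β * Equiv.swap i (LL k)) (LL k) = b₀
            rw [Equiv.Perm.mul_apply, Equiv.swap_apply_right]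
            by_cases hiL2 : i = LL k
            · rw [hiL2, ext_LL]; exact Ne.symm hb₀L
            · intro h; exact hii (huniq i hiL2 h)
          · intro h; exact absurd (Finset.mem_univ _) h
        rw [hfun]
        refine Submodule.smul_mem _ _ (Submodule.subset_span ⟨TC, ?_, rfl⟩)
        calc TC.card ≤ S'.card := Finset.card_image_le
          _ = S.card - 1 := Finset.card_erase_of_mem hb₀
          _ ≤ d - 1 := by omega
      -- Case D : no pair touches L at all
      · push_neg at hB hC
        have HD1 : ∀ p ∈ S, p.1 ≠ LL k := by
          rintro ⟨a, b⟩ hp h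
          dsimp at h
          subst h
          exact hC b hp
        have HD2 : ∀ p ∈ S, p.2 ≠ LL k := by
          rintro ⟨a, b⟩ hp h
          dsimp at h
          subst h
          exact hB a hp
        set TD := S.image (fun p => (dn p.1, dn p.2)) with hTDdef
        set domS := S.image Prod.fst with hdomdef
        have hLdom : LL k ∉ domS := by
          intro h
          obtain ⟨p, hp, hp1⟩ := Finset.mem_image.1 h
          exact HD1 p hp hp1
        have hcarddom : domS.card = S.card := by
          rw [hdomdef]
          refine Finset.card_image_of_injOn ?_
          intro p hp q hq h
          exact Hinj1 p hp q hq h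
        set cD : ℝ := 1 + ((k + 1 - S.card : ℕ) : ℝ) * wc k d with hcDdef
        have hfun : (fun β : Equiv.Perm (Fin (k + 1)) => ∑ i : Fin (k + 2),
            (if i = LL k then (1 : ℝ) else wc k d) *
              permMonomial (k + 2) S (ext β * Equiv.swap i (LL k)))
            = cD • permMonomial (k + 1) TD := by
          funext β
          rw [Pi.smul_apply, smul_eq_mul]
          have hmain : ∀ p ∈ S, ∀ i : Fin (k + 2), i ≠ LL k → i ∉ domS →
              (ext β * Equiv.swap i (LL k)) p.1 = ext β p.1 := by
            intro p hp i hiL hidom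
            have hp1i : p.1 ≠ i := by
              intro h
              exact hidom (Finset.mem_image.2 ⟨p, hp, h⟩)
            rw [Equiv.Perm.mul_apply, Equiv.swap_apply_of_ne_of_ne hp1i (HD1 p hp)]
          have hMD : ∀ (γ : Equiv.Perm (Fin (k + 2))),
              (∀ p ∈ S, γ p.1 = ext β p.1) →
              permMonomial (k + 2) S γ = permMonomial (k + 1) TD β := by
            intro γ hγ
            rw [permMonomial_apply]
            refine prod_lower β _ _ _ ?_ ?_
            · intro p hp
              rw [hγ p hp]
              simp only [ext_eq_iff (HD1 p hp) (HD2 p hp) β]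
            · intro p hp q hq hpsi
              have h1 : dn p.1 = dn q.1 := congrArg Prod.fst hpsi
              have : p.1 = q.1 := by
                rw [← up_dn (HD1 p hp), ← up_dn (HD1 q hq), h1]
              exact Hinj1 p hp q hq this
          have hterm : ∀ i : Fin (k + 2),
              (if i = LL k then (1 : ℝ) else wc k d) *
                permMonomial (k + 2) S (ext β * Equiv.swap i (LL k))
              = ((if i = LL k then (1 : ℝ) else 0) +
                 (if i ∈ insert (LL k) domS then 0 else wc k d)) *
                permMonomial (k + 1) TD β := by
            intro i
            by_cases hiL : i = LL k
            · subst hiL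
              rw [if_pos rfl, if_pos rfl, if_pos (Finset.mem_insert_self _ _)]
              rw [hMD _ (fun p hp => by
                rw [Equiv.Perm.mul_apply, Equiv.swap_self, Equiv.refl_apply])]
              ring
            · by_cases hidom : i ∈ domS
              · obtain ⟨p₀, hp₀, hp₀1⟩ := Finset.mem_image.1 hidom
                rw [if_neg hiL, if_neg hiL,
                  if_pos (Finset.mem_insert_of_mem hidom)]
                rw [permMonomial_apply, Finset.prod_eq_zero hp₀ (h := ?_)]
                · ring
                · refine if_neg ?_
                  show ¬ (ext β * Equiv.swap i (LL k)) p₀.1 = p₀.2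
                  rw [Equiv.Perm.mul_apply, hp₀1, Equiv.swap_apply_left, ext_LL]
                  exact Ne.symm (HD2 p₀ hp₀)
              · have hins : i ∉ insert (LL k) domS := by
                  intro h
                  rcases Finset.mem_insert.1 h with h | h
                  · exact hiL h
                  · exact hidom h
                rw [if_neg hiL, if_neg hiL, if_neg hins]
                rw [hMD _ (fun p hp => hmain p hp i hiL hidom)]
                ring
          rw [Finset.sum_congr rfl (fun i _ => hterm i), ← Finset.sum_mul]
          congr 1
          rw [Finset.sum_add_distrib]
          have h1 : ∑ i : Fin (k + 2), (if i = LL k then (1 : ℝ) else 0) = 1 := by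
            rw [Finset.sum_ite_eq' Finset.univ (LL k) (fun _ => (1 : ℝ))]
            simp
          have h2 : ∑ i : Fin (k + 2), (if i ∈ insert (LL k) domS then (0:ℝ) else wc k d)
              = ((k + 1 - S.card : ℕ) : ℝ) * wc k d := by
            rw [Finset.sum_ite, Finset.sum_const_zero, Finset.sum_const, zero_add]
            have hfilter : (Finset.univ.filter (fun i => i ∉ insert (LL k) domS)).card
                = k + 1 - S.card := by
              have : Finset.univ.filter (fun i => i ∉ insert (LL k) domS)
                  = (insert (LL k) domS)ᶜ := by
                ext x
                simp [Finset.mem_compl]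
              rw [this, Finset.card_compl, Finset.card_insert_of_notMem hLdom,
                hcarddom]
              simp only [Fintype.card_fin]
              omega
            rw [hfilter, nsmul_eq_mul]
          rw [h1, h2]
        rw [hfun]
        by_cases hcard : S.card = d
        · have : cD = 0 := by rw [hcDdef, hcard]; exact wc_cancel hd2
          rw [this, zero_smul]
          exact Submodule.zero_mem _
        · refine Submodule.smul_mem _ _ (Submodule.subset_span ⟨TD, ?_, rfl⟩)
          calc TD.card ≤ S.card := Finset.card_image_le
            _ ≤ d - 1 := by omega

end PDR
namespace PDR
open Equiv Finset

lemma Tfun_mem {k : ℕ} (d : ℕ) (hd1 : 1 ≤ d) (hd2 : d ≤ k)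
    (h : Equiv.Perm (Fin (k + 2)) → ℝ) (hh : PermDegLE (k + 2) d h) :
    (fun β : Equiv.Perm (Fin (k + 1)) => ∑ i : Fin (k + 2),
        (if i = LL k then (1 : ℝ) else wc k d) * h (ext β * Equiv.swap i (LL k)))
    ∈ Submodule.span ℝ {g : Equiv.Perm (Fin (k + 1)) → ℝ |
        ∃ T : Finset (Fin (k + 1) × Fin (k + 1)), T.card ≤ d - 1 ∧
          g = permMonomial (k + 1) T} := by
  refine Submodule.span_induction
    (p := fun x _ => (fun β : Equiv.Perm (Fin (k + 1)) => ∑ i : Fin (k + 2),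
        (if i = LL k then (1 : ℝ) else wc k d) * x (ext β * Equiv.swap i (LL k)))
      ∈ Submodule.span ℝ {g : Equiv.Perm (Fin (k + 1)) → ℝ |
        ∃ T : Finset (Fin (k + 1) × Fin (k + 1)), T.card ≤ d - 1 ∧
          g = permMonomial (k + 1) T}) ?_ ?_ ?_ ?_ hh
  · rintro x ⟨S, hS, rfl⟩
    exact key d hd1 hd2 S hS
  · beta_reduce
    have : (fun β : Equiv.Perm (Fin (k + 1)) => ∑ i : Fin (k + 2),
        (if i = LL k then (1 : ℝ) else wc k d) *
          (0 : Equiv.Perm (Fin (k + 2)) → ℝ) (ext β * Equiv.swap i (LL k)))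
        = (0 : Equiv.Perm (Fin (k + 1)) → ℝ) := by
      funext β; simp
    rw [this]
    exact Submodule.zero_mem _
  · intro x y _ _ px py
    beta_reduce at px py ⊢
    have : (fun β : Equiv.Perm (Fin (k + 1)) => ∑ i : Fin (k + 2),
        (if i = LL k then (1 : ℝ) else wc k d) * (x + y) (ext β * Equiv.swap i (LL k)))
        = (fun β : Equiv.Perm (Fin (k + 1)) => ∑ i : Fin (k + 2),
            (if i = LL k then (1 : ℝ) else wc k d) * x (ext β * Equiv.swap i (LL k)))
          + (fun β : Equiv.Perm (Fin (k + 1)) => ∑ i : Fin (k + 2),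
            (if i = LL k then (1 : ℝ) else wc k d) * y (ext β * Equiv.swap i (LL k))) := by
      funext β
      rw [Pi.add_apply, ← Finset.sum_add_distrib]
      refine Finset.sum_congr rfl fun i _ => ?_
      rw [Pi.add_apply, mul_add]
    rw [this]
    exact Submodule.add_mem _ px py
  · intro a x _ px
    beta_reduce at px ⊢
    have : (fun β : Equiv.Perm (Fin (k + 1)) => ∑ i : Fin (k + 2),
        (if i = LL k then (1 : ℝ) else wc k d) * (a • x) (ext β * Equiv.swap i (LL k)))
        = a • (fun β : Equiv.Perm (Fin (k + 1)) => ∑ i : Fin (k + 2),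
            (if i = LL k then (1 : ℝ) else wc k d) * x (ext β * Equiv.swap i (LL k))) := by
      funext β
      rw [Pi.smul_apply, smul_eq_mul, Finset.mul_sum]
      refine Finset.sum_congr rfl fun i _ => ?_
      rw [Pi.smul_apply, smul_eq_mul]
      ring
    rw [this]
    exact Submodule.smul_mem _ _ px

lemma Tfun_restrict {k : ℕ} (d : ℕ) (h : Equiv.Perm (Fin (k + 2)) → ℝ)
    (hsupp : ∀ α : Equiv.Perm (Fin (k + 2)), α (LL k) ≠ LL k → h α = 0)
    (β : Equiv.Perm (Fin (k + 1))) :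
    ∑ i : Fin (k + 2), (if i = LL k then (1 : ℝ) else wc k d) *
      h (ext β * Equiv.swap i (LL k)) = h (ext β) := by
  rw [Finset.sum_eq_single (LL k)]
  · rw [if_pos rfl, one_mul]
    congr 1
    have : Equiv.swap (LL k) (LL k) = (1 : Equiv.Perm (Fin (k + 2))) := Equiv.swap_self _
    rw [this, mul_one]
  · intro i _ hiL
    rw [hsupp _ ?_, mul_zero]
    rw [Equiv.Perm.mul_apply, Equiv.swap_apply_right]
    exact ext_ne_LL hiL β
  · intro hmem; exact absurd (Finset.mem_univ _) hmem

end PDR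
/-- Degree reduction for the symmetric group: if `f : S_n → {0,1}`
vanishes outside the coset `{α : α(n) = n}`, then the restriction `g` of `f` to that
coset (a function on `S_{n-1}`) satisfies `deg g ≤ max (deg f - 1) 0`. -/
theorem perm_degree_reduction
    (n : ℕ) (hn : 2 ≤ n) (f : Equiv.Perm (Fin n) → ℝ)
    (hBool : ∀ α, f α = 0 ∨ f α = 1)
    (hfix : ∀ α : Equiv.Perm (Fin n), f α = 1 → α ⟨n - 1, by omega⟩ = ⟨n - 1, by omega⟩)
    (g : Equiv.Perm (Fin (n - 1)) → ℝ)
    (hg : ∀ β : Equiv.Perm (Fin (n - 1)), g β = f (extPerm (n - 1) n (by omega) β)) :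
    permDeg (n - 1) g ≤ max (permDeg n f - 1) 0 := by
  classical
  obtain ⟨k, rfl⟩ : ∃ k, n = k + 2 := ⟨n - 2, by omega⟩
  rw [max_eq_left (Nat.zero_le _)]
  set d := permDeg (k + 2) f with hd
  have hLe : ∀ e : ℕ, PermDegLE (k + 1) e g → permDeg (k + 2 - 1) g ≤ e := by
    intro e he
    exact Nat.sInf_le he
  by_cases hzero : ∀ α, f α = 0
  · have hg0 : g = (0 : Equiv.Perm (Fin (k + 1)) → ℝ) :=
      funext fun β => by simp [hg β, hzero]
    refine hLe _ ?_
    rw [PermDegLE, hg0]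
    exact Submodule.zero_mem _
  · push_neg at hzero
    obtain ⟨α₀, hα₀⟩ := hzero
    have hα₀1 : f α₀ = 1 := (hBool α₀).resolve_left hα₀
    have hne : {D | PermDegLE (k + 2) D f}.Nonempty := ⟨k + 1, PDR.anyDeg (k + 1) f⟩
    have hdf : PermDegLE (k + 2) d f := Nat.sInf_mem hne
    have hd1 : 1 ≤ d := by
      rcases Nat.eq_zero_or_pos d with h0 | h1
      · exfalso
        obtain ⟨c, hc⟩ := PDR.const_of_degzero (h0 ▸ hdf)
        have hc1 : c = 1 := by rw [← hc α₀, hα₀1]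
        set τ : Equiv.Perm (Fin (k + 2)) := Equiv.swap ⟨0, by omega⟩ (PDR.LL k) with hτdef
        have hτ : τ (PDR.LL k) ≠ PDR.LL k := by
          rw [hτdef, Equiv.swap_apply_right]
          intro h
          have := congrArg Fin.val h
          simp [PDR.LL] at this
        have hfτ : f τ = 1 := by rw [hc τ, hc1]
        exact hτ (hfix τ hfτ)
      · exact h1
    have hsupp : ∀ α : Equiv.Perm (Fin (k + 2)), α (PDR.LL k) ≠ PDR.LL k → f α = 0 := by
      intro α hne'
      rcases hBool α with h | h
      · exact h
      · exact absurd (hfix α h) hne'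
    by_cases hdk : d ≤ k
    · refine hLe (d - 1) ?_
      have hgeq : g = (fun β : Equiv.Perm (Fin (k + 1)) => ∑ i : Fin (k + 2),
          (if i = PDR.LL k then (1 : ℝ) else PDR.wc k d) *
            f (PDR.ext β * Equiv.swap i (PDR.LL k))) := by
        funext β
        rw [PDR.Tfun_restrict d f hsupp β]
        exact hg β
      rw [hgeq]
      exact PDR.Tfun_mem d hd1 hdk f hdf
    · refine hLe (d - 1) ?_
      exact PDR.degLE_mono (by omega) (PDR.anyDeg k g)
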